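/- Let p = (p₁, p₂) ∈ ℝ² with p₁ ≠ p₂. Then there exists a unique point w in the set C = {(a, b) ∈ ℝ² : a ≥ 2b or b ≥ 2a} minimizing the Euclidean distance to p, i.e., a unique w ∈ C such that ‖p − w‖ ≤ ‖p − w′‖ for all w′ ∈ C. -/

import Mathlib

/-- Norm in `ℝ²` as a square root of a sum of squares. -/
lemma norm_two (v : EuclideanSpace ℝ (Fin 2)) :
    ‖v‖ = Real.sqrt ((v 0) ^ 2 + (v 1) ^ 2) := by
  rw [EuclideanSpace.norm_eq]
  simp [Fin.sum_univ_two, sq_abs]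

/-- Core real lemma in the case `p1 < p0` (minimizer on the boundary of `{a ≥ 2b}`). -/
lemma core1 (p0 p1 : ℝ) (h1 : p0 < 2 * p1) (h2 : p1 < 2 * p0) (hlt : p1 < p0) :
    ∃! w : ℝ × ℝ, (w.1 ≥ 2 * w.2 ∨ w.2 ≥ 2 * w.1) ∧
      ∀ a b : ℝ, (a ≥ 2 * b ∨ b ≥ 2 * a) →
        (p0 - w.1) ^ 2 + (p1 - w.2) ^ 2 ≤ (p0 - a) ^ 2 + (p1 - b) ^ 2 := by
  refine ⟨((4 * p0 + 2 * p1) / 5, (2 * p0 + p1) / 5), ⟨?_, ?_⟩, ?_⟩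
  · left; dsimp only; linarith
  · intro a b hab
    dsimp only
    rcases hab with h | h
    · nlinarith [sq_nonneg (2 * (a - p0) + (b - p1)),
        mul_nonneg (by linarith : (0:ℝ) ≤ a - 2 * b)
          (by linarith : (0:ℝ) ≤ a - 2 * b + 2 * (2 * p1 - p0))]
    · nlinarith [sq_nonneg (2 * (b - p1) + (a - p0)),
        mul_nonneg (by linarith : (0:ℝ) ≤ b - 2 * a)
          (by linarith : (0:ℝ) ≤ b - 2 * a + 2 * (2 * p0 - p1)),
        mul_pos (by linarith : (0:ℝ) < 3 * (p0 - p1))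
          (by linarith : (0:ℝ) < (2 * p0 - p1) + (2 * p1 - p0))]
  · rintro ⟨a, b⟩ ⟨hab, hmin⟩
    dsimp only at hab hmin
    have hle : (p0 - a) ^ 2 + (p1 - b) ^ 2 ≤ (2 * p1 - p0) ^ 2 / 5 := by
      have := hmin ((4 * p0 + 2 * p1) / 5) ((2 * p0 + p1) / 5) (by left; linarith)
      nlinarith [this]
    rcases hab with h | h
    · -- equality case on the halfplane `a ≥ 2b`
      have hub : a - 2 * b ≤ 0 := by
        by_contra h'
        push_neg at h'
        have hmul : (0:ℝ) < (a - 2 * b) * (a - 2 * b + 2 * (2 * p1 - p0)) :=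
          mul_pos h' (by linarith)
        nlinarith [sq_nonneg (2 * (a - p0) + (b - p1)), hmul, hle]
      have heq : a = 2 * b := by linarith
      subst heq
      have hz : (2 * (2 * b - p0) + (b - p1)) ^ 2 ≤ 0 := by nlinarith [hle]
      have hz0 : 2 * (2 * b - p0) + (b - p1) = 0 :=
        sq_eq_zero_iff.mp (le_antisymm hz (sq_nonneg _))
      have hb : b = (2 * p0 + p1) / 5 := by linarith
      rw [hb]
      norm_num
      ring
    · -- halfplane `b ≥ 2a`: contradiction, it is strictly farther
      exfalso
      nlinarith [sq_nonneg (2 * (b - p1) + (a - p0)), hle,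
        mul_nonneg (by linarith : (0:ℝ) ≤ b - 2 * a)
          (by linarith : (0:ℝ) ≤ b - 2 * a + 2 * (2 * p0 - p1)),
        mul_pos (by linarith : (0:ℝ) < 3 * (p0 - p1))
          (by linarith : (0:ℝ) < (2 * p0 - p1) + (2 * p1 - p0))]

/-- Core real lemma in the case `p0 < p1`, by symmetry. -/
lemma core2 (p0 p1 : ℝ) (h1 : p0 < 2 * p1) (h2 : p1 < 2 * p0) (hlt : p0 < p1) :
    ∃! w : ℝ × ℝ, (w.1 ≥ 2 * w.2 ∨ w.2 ≥ 2 * w.1) ∧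
      ∀ a b : ℝ, (a ≥ 2 * b ∨ b ≥ 2 * a) →
        (p0 - w.1) ^ 2 + (p1 - w.2) ^ 2 ≤ (p0 - a) ^ 2 + (p1 - b) ^ 2 := by
  obtain ⟨⟨u0, u1⟩, ⟨hc, hm⟩, hu⟩ := core1 p1 p0 h2 h1 hlt
  simp only at hc hm
  refine ⟨(u1, u0), ⟨hc.symm, ?_⟩, ?_⟩
  · intro a b hab
    have := hm b a hab.symm
    dsimp only
    linarith
  · rintro ⟨a, b⟩ ⟨hab, hmin⟩
    dsimp only at hab hmin
    have h' := hu (b, a) ⟨hab.symm, fun a' b' hab' => by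
      have := hmin b' a' hab'.symm; dsimp only; linarith⟩
    have h1' : b = u0 := congrArg Prod.fst h'
    have h2' : a = u1 := congrArg Prod.snd h'
    simp [h1', h2']

/-- If the two coordinates of `p ∈ ℝ²` differ, then there is a unique point of the
liveness set `C = {(a, b) : a ≥ 2b ∨ b ≥ 2a}` minimizing the Euclidean distance to `p`. -/
theorem stmt_11 (p : EuclideanSpace ℝ (Fin 2)) (hp : p 0 ≠ p 1) :
    ∃! w : EuclideanSpace ℝ (Fin 2),
      w ∈ {x : EuclideanSpace ℝ (Fin 2) | x 0 ≥ 2 * x 1 ∨ x 1 ≥ 2 * x 0} ∧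
      ∀ w' ∈ {x : EuclideanSpace ℝ (Fin 2) | x 0 ≥ 2 * x 1 ∨ x 1 ≥ 2 * x 0},
        ‖p - w‖ ≤ ‖p - w'‖ := by
  by_cases hC : p 0 ≥ 2 * p 1 ∨ p 1 ≥ 2 * p 0
  · refine ⟨p, ⟨hC, fun w' _ => by simp⟩, ?_⟩
    rintro w ⟨hw, hmin⟩
    have h := hmin p hC
    have hn : ‖p - w‖ ≤ 0 := by simpa using h
    have : p - w = 0 := norm_le_zero_iff.mp hn
    exact (sub_eq_zero.mp this).symm
  · push_neg at hC
    obtain ⟨h1, h2⟩ := hC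
    have hcore : ∃! w : ℝ × ℝ, (w.1 ≥ 2 * w.2 ∨ w.2 ≥ 2 * w.1) ∧
        ∀ a b : ℝ, (a ≥ 2 * b ∨ b ≥ 2 * a) →
          (p 0 - w.1) ^ 2 + (p 1 - w.2) ^ 2 ≤ (p 0 - a) ^ 2 + (p 1 - b) ^ 2 := by
      rcases lt_or_gt_of_ne hp with hlt | hlt
      · exact core2 (p 0) (p 1) (by linarith) (by linarith) hlt
      · exact core1 (p 0) (p 1) (by linarith) (by linarith) hlt
    obtain ⟨⟨w0, w1⟩, ⟨hwC, hwmin⟩, huniq⟩ := hcore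
    simp only at hwC hwmin
    refine ⟨!₂[w0, w1], ⟨?_, ?_⟩, ?_⟩
    · simpa using hwC
    · intro w' hw'
      rw [norm_two, norm_two]
      apply Real.sqrt_le_sqrt
      have := hwmin (w' 0) (w' 1) hw'
      simp only [PiLp.sub_apply, PiLp.toLp_apply, Matrix.cons_val_zero, Matrix.cons_val_one, Matrix.head_cons]
      linarith
    · intro w hw
      obtain ⟨hwC', hwmin'⟩ := hw
      have key : ∀ a b : ℝ, (a ≥ 2 * b ∨ b ≥ 2 * a) →
          (p 0 - w 0) ^ 2 + (p 1 - w 1) ^ 2 ≤ (p 0 - a) ^ 2 + (p 1 - b) ^ 2 := by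
        intro a b hab
        obtain ⟨q, hq0, hq1⟩ : ∃ q : EuclideanSpace ℝ (Fin 2), q 0 = a ∧ q 1 = b :=
          ⟨!₂[a, b], rfl, rfl⟩
        have hm := hwmin' q (by rw [Set.mem_setOf_eq, hq0, hq1]; exact hab)
        rw [norm_two, norm_two] at hm
        have h1' : (0:ℝ) ≤ ((p - w) 0) ^ 2 + ((p - w) 1) ^ 2 := by positivity
        have h2' : (0:ℝ) ≤ ((p - q) 0) ^ 2 + ((p - q) 1) ^ 2 := by positivity
        have hsq := pow_le_pow_left₀ (Real.sqrt_nonneg _) hm 2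
        rw [Real.sq_sqrt h1', Real.sq_sqrt h2'] at hsq
        simp only [PiLp.sub_apply, hq0, hq1] at hsq
        linarith
      have h' := huniq (w 0, w 1) ⟨hwC', key⟩
      have e0 : w 0 = w0 := congrArg Prod.fst h'
      have e1 : w 1 = w1 := congrArg Prod.snd h'
      ext i
      fin_cases i <;> simpa using by first | exact e0 | exact e1
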